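/- If f, g ∈ ℂ[[x,y,ℏ]] are both Borel-analytic, then their normal-ordered product f ⋆ g = Σ_{k≥0} (ℏᵏ/k!) (∂_yᵏ f)(∂_xᵏ g) is Borel-analytic. In other words, the set 𝒬 of Borel-analytic formal series is a subalgebra of (ℂ[[x,y,ℏ]], ⋆). (Boutet de Monvel–Krée / Pham: 𝒬 is a subalgebra of the formal Heisenberg algebra.) -/

import Mathlib

open scoped Classical

noncomputable section

variable {σ : Type*} [DecidableEq σ]

/-- Build a multivariate formal power series from its coefficient function. -/
def ofCoeff (g : (σ →₀ ℕ) → ℂ) : MvPowerSeries σ ℂ := g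

/-- The total degree of a monomial exponent. -/
def degOf (d : σ →₀ ℕ) : ℕ := d.sum fun _ n => n

/-- A formal power series is convergent (has a positive polyradius of convergence) iff
its coefficients grow at most geometrically. -/
def IsConv (f : MvPowerSeries σ ℂ) : Prop :=
  ∃ C R : ℝ, 0 < R ∧ ∀ d : σ →₀ ℕ, ‖MvPowerSeries.coeff d f‖ ≤ C * R ^ degOf d

/-- The Borel transform with respect to the variable `h` (thought of as `ℏ`):
`Σ a_k ℏ^k ↦ Σ_{k ≥ 1} a_k ℏ^{k-1}/(k-1)!`, i.e. the coefficient of `ℏ^j` in `Bf` is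
`a_{j+1}/j!` (the other variables being spectators). -/
def hborel (h : σ) (f : MvPowerSeries σ ℂ) : MvPowerSeries σ ℂ :=
  ofCoeff fun d => (1 / (d h).factorial : ℂ) *
    MvPowerSeries.coeff (d + Finsupp.single h 1) f

/-- The `ℏ`-free part of a series: the sum of the monomials not involving `h`. -/
def hfree (h : σ) (f : MvPowerSeries σ ℂ) : MvPowerSeries σ ℂ :=
  ofCoeff fun d => if d h = 0 then MvPowerSeries.coeff d f else 0

/-- `f` is Borel-analytic (of Gevrey class) with respect to the variable `h`:
its `ℏ`-Borel transform and its `ℏ`-free part are convergent power series. -/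
def BorelAnalytic (h : σ) (f : MvPowerSeries σ ℂ) : Prop :=
  IsConv (hborel h f) ∧ IsConv (hfree h f)

/-- `f` depends only on the variables in `S`. -/
def DependsOnlyOn (f : MvPowerSeries σ ℂ) (S : Set σ) : Prop :=
  ∀ d : σ →₀ ℕ, (∃ i ∉ S, d i ≠ 0) → MvPowerSeries.coeff d f = 0

/-- The formal partial derivative `∂_i`. -/
def pdF (i : σ) (f : MvPowerSeries σ ℂ) : MvPowerSeries σ ℂ :=
  ofCoeff fun d => ((d i : ℕ) + 1 : ℂ) *
    MvPowerSeries.coeff (d + Finsupp.single i 1) f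

/-- The normal-ordered (total symbol) product of the Heisenberg algebra
`[a, a†] = ℏ`, with `x` the symbol of `a†`, `y` the symbol of `a` and `h` that of `ℏ`:
`f ⋆ g = Σ_k (ℏ^k/k!) (∂_y^k f)(∂_x^k g)`.  All remaining variables are central. -/
def nstar (x y h : σ) (f g : MvPowerSeries σ ℂ) : MvPowerSeries σ ℂ :=
  ofCoeff fun d => ∑ k ∈ Finset.range (d h + 1),
    (1 / k.factorial : ℂ) *
      MvPowerSeries.coeff (d - Finsupp.single h k) ((pdF y)^[k] f * (pdF x)^[k] g)

/-- Iterated `⋆`-powers: `f^{⋆0} = 1`, `f^{⋆(m+1)} = f ⋆ f^{⋆m}`. -/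
def nstarPow (x y h : σ) (f : MvPowerSeries σ ℂ) : ℕ → MvPowerSeries σ ℂ
  | 0 => 1
  | m + 1 => nstar x y h f (nstarPow x y h f m)

/-- The coefficient of `z^m` in `ψ` (a series in the central variables),
`z` being the variable `zv`. -/
def zslice (zv : σ) (ψ : MvPowerSeries σ ℂ) (m : ℕ) : MvPowerSeries σ ℂ :=
  ofCoeff fun d => if d zv = 0 then
    MvPowerSeries.coeff (d + Finsupp.single zv m) ψ else 0

/-- Substitution `ψ ∘ f = Σ_m α_m ⋆ f^{⋆m}` of an element `f` (with vanishing constant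
coefficient) into the series `ψ = Σ_m α_m z^m`, `z` being the variable `zv` and the
`α_m` series in the central variables. -/
def zsubst (x y h zv : σ) (ψ f : MvPowerSeries σ ℂ) : MvPowerSeries σ ℂ :=
  ofCoeff fun d => ∑' m : ℕ,
    MvPowerSeries.coeff d (nstar x y h (zslice zv ψ m) (nstarPow x y h f m))

end


section BKP

open MvPowerSeries Finsupp Finset

/-! ### Elementary combinatorial lemmas -/

lemma degOf_eq (d : Fin 3 →₀ ℕ) : degOf d = d 0 + d 1 + d 2 := by
  rw [degOf, Finsupp.sum_fintype _ _ (fun _ => rfl), Fin.sum_univ_three]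

lemma degOf_add (a b : Fin 3 →₀ ℕ) : degOf (a + b) = degOf a + degOf b := by
  simp only [degOf_eq, Finsupp.add_apply]; ring

lemma degOf_single (i : Fin 3) (k : ℕ) : degOf (Finsupp.single i k) = k := by
  rw [degOf, Finsupp.sum_single_index]; rfl

def myasc : ℕ → ℕ → ℕ
  | _, 0 => 1
  | n, (k+1) => (n+1) * myasc (n+1) k

lemma myasc_mul_factorial (n k : ℕ) : myasc n k * n.factorial = (n + k).factorial := by
  induction k generalizing n with
  | zero => simp [myasc]
  | succ k ih =>
    show (n+1) * myasc (n+1) k * n.factorial = _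
    have h : (n+1) * myasc (n+1) k * n.factorial = myasc (n+1) k * (n+1).factorial := by
      rw [Nat.factorial_succ]; ring
    rw [h, ih]; congr 1; omega

lemma myasc_eq (n k : ℕ) : myasc n k = (n + k).choose k * k.factorial := by
  have h1 := myasc_mul_factorial n k
  have h2 : (n+k).choose k * k.factorial * n.factorial = (n+k).factorial := by
    have := Nat.choose_mul_factorial_mul_factorial (show k ≤ n + k from Nat.le_add_left _ _)
    simpa [Nat.add_sub_cancel] using this
  exact Nat.eq_of_mul_eq_mul_right n.factorial_pos (by rw [h1, h2])

lemma choose_le_two_pow (m k : ℕ) : m.choose k ≤ 2 ^ m := by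
  rcases le_or_gt k m with h | h
  · calc m.choose k ≤ ∑ i ∈ Finset.range (m+1), m.choose i :=
          Finset.single_le_sum (fun i _ => Nat.zero_le _) (Finset.mem_range.2 (by omega))
      _ = 2 ^ m := Nat.sum_range_choose m
  · rw [Nat.choose_eq_zero_of_lt h]; exact Nat.zero_le _

lemma myasc_le (n k : ℕ) : myasc n k ≤ 2 ^ (n + k) * k.factorial := by
  rw [myasc_eq]
  exact Nat.mul_le_mul_right _ (choose_le_two_pow _ _)

lemma fac_mul_fac_le (a b : ℕ) : a.factorial * b.factorial ≤ (a + b).factorial :=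
  Nat.le_of_dvd (Nat.factorial_pos _) (Nat.factorial_mul_factorial_dvd_factorial_add a b)

lemma coeff_pdF_iter (i : Fin 3) (k : ℕ) (f : MvPowerSeries (Fin 3) ℂ) (d : Fin 3 →₀ ℕ) :
    MvPowerSeries.coeff d ((pdF i)^[k] f) =
      (myasc (d i) k : ℂ) * MvPowerSeries.coeff (d + Finsupp.single i k) f := by
  induction k generalizing d with
  | zero => simp [myasc]
  | succ k ih =>
    rw [Function.iterate_succ_apply']
    have h1 : MvPowerSeries.coeff d (pdF i ((pdF i)^[k] f)) =
        ((d i : ℂ) + 1) * MvPowerSeries.coeff (d + Finsupp.single i 1) ((pdF i)^[k] f) := rfl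
    rw [h1, ih]
    have h2 : (d + Finsupp.single i 1 : Fin 3 →₀ ℕ) i = d i + 1 := by
      rw [Finsupp.add_apply, Finsupp.single_eq_same]
    have h3 : d + Finsupp.single i 1 + Finsupp.single i k = d + Finsupp.single i (k+1) := by
      rw [add_assoc, ← Finsupp.single_add, add_comm 1 k]
    rw [h2, h3]
    have h4 : myasc (d i) (k+1) = (d i + 1) * myasc (d i + 1) k := rfl
    rw [h4]
    push_cast
    ring

lemma card_antidiagonal_le (m : Fin 3 →₀ ℕ) :
    (Finset.HasAntidiagonal.antidiagonal m).card ≤ 2 ^ degOf m := by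
  have hinj : Set.InjOn Prod.fst
      (Finset.HasAntidiagonal.antidiagonal m : Set ((Fin 3 →₀ ℕ) × (Fin 3 →₀ ℕ))) := by
    intro p hp q hq hpq
    rw [Finset.mem_coe, Finset.HasAntidiagonal.mem_antidiagonal] at hp hq
    have h2 : p.2 = q.2 := by
      have h := hp.trans hq.symm
      rw [hpq] at h
      exact add_left_cancel h
    exact Prod.ext hpq h2
  have hmap : ∀ p ∈ Finset.HasAntidiagonal.antidiagonal m, p.1 ∈ Finset.Iic m := by
    intro p hp
    rw [Finset.HasAntidiagonal.mem_antidiagonal] at hp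
    exact Finset.mem_Iic.2 (hp ▸ le_self_add)
  calc (Finset.HasAntidiagonal.antidiagonal m).card ≤ (Finset.Iic m).card :=
        Finset.card_le_card_of_injOn Prod.fst hmap hinj
    _ = ∏ i ∈ m.support, (m i + 1) := by
        rw [Finsupp.card_Iic]; exact Finset.prod_congr rfl fun i _ => by rw [Nat.card_Iic]
    _ ≤ ∏ i ∈ m.support, 2 ^ (m i) := Finset.prod_le_prod' fun i _ => Nat.lt_two_pow_self
    _ = 2 ^ degOf m := by rw [Finset.prod_pow_eq_pow_sum]; rfl

/-! ### The combined coefficient bound -/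

/-- Combined Gevrey-type bound: `‖a_d‖ ≤ C (d 2)! R^{|d|}`. -/
def Bnd (C R : ℝ) (f : MvPowerSeries (Fin 3) ℂ) : Prop :=
  ∀ d : Fin 3 →₀ ℕ, ‖MvPowerSeries.coeff d f‖ ≤ C * (d 2).factorial * R ^ degOf d

lemma bnd_mono {C C' R R' : ℝ} {f : MvPowerSeries (Fin 3) ℂ} (h : Bnd C R f)
    (hC0 : 0 ≤ C) (hC : C ≤ C') (hR0 : 0 ≤ R) (hR : R ≤ R') : Bnd C' R' f := by
  intro d
  refine (h d).trans ?_
  have hfnn : (0:ℝ) ≤ ((d 2).factorial : ℝ) := Nat.cast_nonneg _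
  exact mul_le_mul (mul_le_mul_of_nonneg_right hC hfnn) (pow_le_pow_left₀ hR0 hR _)
    (pow_nonneg hR0 _) (mul_nonneg (hC0.trans hC) hfnn)

lemma extract {f : MvPowerSeries (Fin 3) ℂ} (hf : BorelAnalytic 2 f) :
    ∃ C R : ℝ, 0 ≤ C ∧ 1 ≤ R ∧ Bnd C R f := by
  obtain ⟨⟨C1, R1, hR1, h1⟩, ⟨C2, R2, hR2, h2⟩⟩ := hf
  set C : ℝ := max (max C1 C2) 0 with hCdef
  set R : ℝ := max (max R1 R2) 1 with hRdef
  have hC0 : (0:ℝ) ≤ C := le_max_right _ _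
  have hR1' : (1:ℝ) ≤ R := le_max_right _ _
  have hC1 : C1 ≤ C := (le_max_left _ _).trans (le_max_left _ _)
  have hC2 : C2 ≤ C := (le_max_right _ _).trans (le_max_left _ _)
  have hRR1 : R1 ≤ R := (le_max_left _ _).trans (le_max_left _ _)
  have hRR2 : R2 ≤ R := (le_max_right _ _).trans (le_max_left _ _)
  have hR0 : (0:ℝ) ≤ R := by linarith
  refine ⟨C, R, hC0, hR1', fun d => ?_⟩
  rcases Nat.eq_zero_or_pos (d 2) with h0 | hpos
  · have he : MvPowerSeries.coeff d (hfree 2 f) = MvPowerSeries.coeff d f := by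
      show (if d 2 = 0 then MvPowerSeries.coeff d f else 0) = _
      rw [if_pos h0]
    have hb := h2 d
    rw [he] at hb
    refine hb.trans ?_
    rw [h0]
    simp only [Nat.factorial_zero, Nat.cast_one, mul_one]
    have hpow : R2 ^ degOf d ≤ R ^ degOf d := pow_le_pow_left₀ hR2.le hRR2 _
    have hpnn : (0:ℝ) ≤ R2 ^ degOf d := pow_nonneg hR2.le _
    rcases le_total C2 0 with hc | hc
    · have h1' : C2 * R2 ^ degOf d ≤ 0 := mul_nonpos_of_nonpos_of_nonneg hc hpnn
      have h2' : (0:ℝ) ≤ C * R ^ degOf d := by positivity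
      linarith
    · exact mul_le_mul hC2 hpow hpnn hC0
  · set d' := d - Finsupp.single 2 1 with hd'
    have hle : Finsupp.single 2 1 ≤ d := by
      rw [Finsupp.single_le_iff]; omega
    have hdd : d' + Finsupp.single 2 1 = d := tsub_add_cancel_of_le hle
    have hd'2 : d' 2 = d 2 - 1 := by
      rw [hd', Finsupp.tsub_apply, Finsupp.single_eq_same]
    have hb : MvPowerSeries.coeff d' (hborel 2 f) =
        (1 / ((d' 2).factorial : ℂ)) * MvPowerSeries.coeff d f := by
      show (1 / ((d' 2).factorial : ℂ)) *
          MvPowerSeries.coeff (d' + Finsupp.single 2 1) f = _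
      rw [hdd]
    have hfacne : ((d' 2).factorial : ℂ) ≠ 0 := by
      exact_mod_cast (d' 2).factorial_pos.ne'
    have hcoeff : MvPowerSeries.coeff d f =
        ((d' 2).factorial : ℂ) * MvPowerSeries.coeff d' (hborel 2 f) := by
      rw [hb]; field_simp
    have hdeg : degOf d = degOf d' + 1 := by
      rw [← hdd, degOf_add, degOf_single]
    have hnorm : ‖MvPowerSeries.coeff d f‖ =
        ((d' 2).factorial : ℝ) * ‖MvPowerSeries.coeff d' (hborel 2 f)‖ := by
      rw [hcoeff, norm_mul, Complex.norm_natCast]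
    rw [hnorm]
    have hbd := h1 d'
    have hC1' : (0:ℝ) ≤ C1 ∨ C1 < 0 := le_or_gt 0 C1
    have key : ((d' 2).factorial : ℝ) * ‖MvPowerSeries.coeff d' (hborel 2 f)‖ ≤
        ((d' 2).factorial : ℝ) * (C * R ^ degOf d') := by
      have hpow : R1 ^ degOf d' ≤ R ^ degOf d' := pow_le_pow_left₀ hR1.le hRR1 _
      have hpnn : (0:ℝ) ≤ R1 ^ degOf d' := pow_nonneg hR1.le _
      have hup : C1 * R1 ^ degOf d' ≤ C * R ^ degOf d' := by
        rcases le_total C1 0 with hc | hc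
        · have h1' : C1 * R1 ^ degOf d' ≤ 0 := mul_nonpos_of_nonpos_of_nonneg hc hpnn
          have h2' : (0:ℝ) ≤ C * R ^ degOf d' := by positivity
          linarith
        · exact mul_le_mul hC1 hpow hpnn hC0
      exact mul_le_mul_of_nonneg_left (hbd.trans hup) (Nat.cast_nonneg _)
    refine key.trans ?_
    have hfacle : ((d' 2).factorial : ℝ) ≤ ((d 2).factorial : ℝ) := by
      exact_mod_cast Nat.factorial_le (by omega)
    have hpowle : R ^ degOf d' ≤ R ^ degOf d := by
      apply pow_le_pow_right₀ hR1'
      omega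
    calc ((d' 2).factorial : ℝ) * (C * R ^ degOf d')
        ≤ ((d 2).factorial : ℝ) * (C * R ^ degOf d) := by gcongr
      _ = C * (d 2).factorial * R ^ degOf d := by ring

lemma reconstruct {f : MvPowerSeries (Fin 3) ℂ} {C R : ℝ} (hC : 0 ≤ C) (hR : 1 ≤ R)
    (h : Bnd C R f) : BorelAnalytic 2 f := by
  have hR0 : (0:ℝ) < R := lt_of_lt_of_le one_pos hR
  constructor
  · refine ⟨C * R, 2 * R, by linarith, fun d => ?_⟩
    have hb : MvPowerSeries.coeff d (hborel 2 f) =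
        (1 / ((d 2).factorial : ℂ)) *
          MvPowerSeries.coeff (d + Finsupp.single 2 1) f := rfl
    have h2 : (d + Finsupp.single 2 1 : Fin 3 →₀ ℕ) 2 = d 2 + 1 := by
      rw [Finsupp.add_apply, Finsupp.single_eq_same]
    have hdeg : degOf (d + Finsupp.single 2 1) = degOf d + 1 := by
      rw [degOf_add, degOf_single]
    have hfpos : (0:ℝ) < ((d 2).factorial : ℝ) := by
      exact_mod_cast (d 2).factorial_pos
    have hnn : ‖MvPowerSeries.coeff d (hborel 2 f)‖ =
        (1 / ((d 2).factorial : ℝ)) *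
          ‖MvPowerSeries.coeff (d + Finsupp.single 2 1) f‖ := by
      rw [hb, norm_mul]
      congr 1
      rw [norm_div, norm_one, Complex.norm_natCast]
    rw [hnn]
    have hbd := h (d + Finsupp.single 2 1)
    rw [h2, hdeg] at hbd
    have hd2 : (d 2 : ℝ) + 1 ≤ 2 ^ degOf d := by
      have h1 : d 2 ≤ degOf d := by rw [degOf_eq]; omega
      have h2' : degOf d < 2 ^ degOf d := Nat.lt_two_pow_self
      have : d 2 + 1 ≤ 2 ^ degOf d := by omega
      exact_mod_cast this
    calc (1 / ((d 2).factorial : ℝ)) *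
          ‖MvPowerSeries.coeff (d + Finsupp.single 2 1) f‖
        ≤ (1 / ((d 2).factorial : ℝ)) *
            (C * ((d 2 + 1).factorial : ℝ) * R ^ (degOf d + 1)) := by gcongr
      _ = C * ((d 2 : ℝ) + 1) * R ^ (degOf d + 1) := by
          rw [Nat.factorial_succ]
          push_cast
          field_simp
      _ ≤ C * (2:ℝ) ^ degOf d * R ^ (degOf d + 1) := by gcongr
      _ = (C * R) * (2 * R) ^ degOf d := by
          rw [pow_succ, mul_pow]; ring
  · refine ⟨C, R, hR0, fun d => ?_⟩
    have hb : MvPowerSeries.coeff d (hfree 2 f) =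
        (if d 2 = 0 then MvPowerSeries.coeff d f else 0) := rfl
    rw [hb]
    split_ifs with h0
    · have hbd := h d
      rw [h0] at hbd
      simpa using hbd
    · simp only [norm_zero]
      positivity

/-! ### The multiplicative estimate -/

lemma pair_bound {C R : ℝ} (hC : 0 ≤ C) (hR : 1 ≤ R) {k n a1 a2 s1 s2 f1 f2 m2 : ℕ}
    (h1 : a1 ≤ s1) (h2 : a2 ≤ s2) (hs : s1 + s2 + k ≤ n) (hk : k ≤ n)
    (hf12 : f1 + f2 = m2)
    {F G : ℝ} (hF0 : 0 ≤ F) (hG0 : 0 ≤ G)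
    (hF : F ≤ C * (f1.factorial : ℝ) * R ^ (s1 + k))
    (hG : G ≤ C * (f2.factorial : ℝ) * R ^ (s2 + k)) :
    (myasc a1 k : ℝ) * F * ((myasc a2 k : ℝ) * G) ≤
      (k.factorial : ℝ) * (k.factorial : ℝ) * (C * C) * (m2.factorial : ℝ) *
        (4 * R ^ 2) ^ n := by
  have hR0 : (0:ℝ) ≤ R := by linarith
  have hA1 : (myasc a1 k : ℝ) ≤ 2 ^ (a1 + k) * (k.factorial : ℝ) := by
    exact_mod_cast myasc_le a1 k
  have hA2 : (myasc a2 k : ℝ) ≤ 2 ^ (a2 + k) * (k.factorial : ℝ) := by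
    exact_mod_cast myasc_le a2 k
  calc (myasc a1 k : ℝ) * F * ((myasc a2 k : ℝ) * G)
      ≤ (2 ^ (a1 + k) * (k.factorial : ℝ)) * (C * (f1.factorial : ℝ) * R ^ (s1 + k)) *
          ((2 ^ (a2 + k) * (k.factorial : ℝ)) * (C * (f2.factorial : ℝ) * R ^ (s2 + k))) := by
        gcongr <;> positivity
    _ = ((k.factorial : ℝ) * (k.factorial : ℝ) * (C * C) *
          ((f1.factorial : ℝ) * (f2.factorial : ℝ))) *
          ((2:ℝ) ^ (a1 + k) * 2 ^ (a2 + k) * (R ^ (s1 + k) * R ^ (s2 + k))) := by ring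
    _ = ((k.factorial : ℝ) * (k.factorial : ℝ) * (C * C) *
          ((f1.factorial : ℝ) * (f2.factorial : ℝ))) *
          ((2:ℝ) ^ ((a1 + k) + (a2 + k)) * R ^ ((s1 + k) + (s2 + k))) := by
        rw [pow_add (2:ℝ) (a1+k) (a2+k), pow_add R (s1+k) (s2+k)]
    _ ≤ ((k.factorial : ℝ) * (k.factorial : ℝ) * (C * C) * (m2.factorial : ℝ)) *
          ((2:ℝ) ^ (2 * n) * R ^ (2 * n)) := by
        have hfac : (f1.factorial : ℝ) * (f2.factorial : ℝ) ≤ (m2.factorial : ℝ) := by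
          rw [← hf12]
          exact_mod_cast fac_mul_fac_le f1 f2
        have he1 : (a1 + k) + (a2 + k) ≤ 2 * n := by omega
        have he2 : (s1 + k) + (s2 + k) ≤ 2 * n := by omega
        have hfacnn : (0:ℝ) ≤ (k.factorial : ℝ) * (k.factorial : ℝ) * (C * C) := by positivity
        have t1 : (2:ℝ) ^ ((a1 + k) + (a2 + k)) ≤ (2:ℝ) ^ (2 * n) :=
          pow_le_pow_right₀ one_le_two he1
        have t2 : R ^ ((s1 + k) + (s2 + k)) ≤ R ^ (2 * n) :=
          pow_le_pow_right₀ hR he2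
        exact mul_le_mul (mul_le_mul_of_nonneg_left hfac hfacnn)
          (mul_le_mul t1 t2 (by positivity) (by positivity)) (by positivity) (by positivity)
    _ = (k.factorial : ℝ) * (k.factorial : ℝ) * (C * C) * (m2.factorial : ℝ) *
          (4 * R ^ 2) ^ n := by
        have h4 : (2:ℝ) ^ (2 * n) * R ^ (2 * n) = (4 * R ^ 2) ^ n := by
          rw [pow_mul (2:ℝ), pow_mul R, ← mul_pow]
          congr 1
          ring
        rw [h4]

lemma core {f g : MvPowerSeries (Fin 3) ℂ} {C R : ℝ} (hC : 0 ≤ C) (hR : 1 ≤ R)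
    (hf : Bnd C R f) (hg : Bnd C R g) : Bnd (C * C) (16 * R ^ 2) (nstar 0 1 2 f g) := by
  intro d
  have hR0 : (0:ℝ) ≤ R := by linarith
  set n := degOf d with hn
  have hd2n : d 2 ≤ n := by rw [hn, degOf_eq]; omega
  have hn2 : n < 2 ^ n := Nat.lt_two_pow_self
  have hcoeff : MvPowerSeries.coeff d (nstar 0 1 2 f g) =
      ∑ k ∈ Finset.range (d 2 + 1), (1 / (k.factorial : ℂ)) *
        MvPowerSeries.coeff (d - Finsupp.single 2 k)
          ((pdF 1)^[k] f * (pdF 0)^[k] g) := rfl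
  rw [hcoeff]
  have key : ∀ k ∈ Finset.range (d 2 + 1),
      ‖(1 / (k.factorial : ℂ)) * MvPowerSeries.coeff (d - Finsupp.single 2 k)
        ((pdF 1)^[k] f * (pdF 0)^[k] g)‖ ≤
        C * C * ((d 2).factorial : ℝ) * (8 * R ^ 2) ^ n := by
    intro k hk
    rw [Finset.mem_range] at hk
    have hkd : k ≤ d 2 := by omega
    set m := d - Finsupp.single 2 k with hm
    have hm2 : m 2 = d 2 - k := by
      rw [hm, Finsupp.tsub_apply, Finsupp.single_eq_same]
    have hm0 : m 0 = d 0 := by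
      rw [hm, Finsupp.tsub_apply, Finsupp.single_eq_of_ne (by decide), Nat.sub_zero]
    have hm1 : m 1 = d 1 := by
      rw [hm, Finsupp.tsub_apply, Finsupp.single_eq_of_ne (by decide), Nat.sub_zero]
    have hdegm : degOf m + k = n := by
      rw [hn, degOf_eq, degOf_eq, hm0, hm1, hm2]; omega
    -- bound each pair in the antidiagonal
    have hpair : ∀ p ∈ Finset.HasAntidiagonal.antidiagonal m,
        ‖MvPowerSeries.coeff p.1 ((pdF 1)^[k] f) *
          MvPowerSeries.coeff p.2 ((pdF 0)^[k] g)‖ ≤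
          (k.factorial : ℝ) * (k.factorial : ℝ) * (C * C) * ((m 2).factorial : ℝ) *
            (4 * R ^ 2) ^ n := by
      intro p hp
      rw [Finset.HasAntidiagonal.mem_antidiagonal] at hp
      have hp2 : p.1 2 + p.2 2 = m 2 := by
        have := DFunLike.congr_fun hp (2 : Fin 3)
        rwa [Finsupp.add_apply] at this
      have hdegp : degOf p.1 + degOf p.2 = degOf m := by rw [← degOf_add, hp]
      have ha1 : p.1 1 ≤ degOf p.1 := by rw [degOf_eq]; omega
      have ha2 : p.2 0 ≤ degOf p.2 := by rw [degOf_eq]; omega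
      -- expand through coeff_pdF_iter
      rw [coeff_pdF_iter, coeff_pdF_iter]
      have hexp : ‖(myasc (p.1 1) k : ℂ) *
            MvPowerSeries.coeff (p.1 + Finsupp.single 1 k) f *
            ((myasc (p.2 0) k : ℂ) *
              MvPowerSeries.coeff (p.2 + Finsupp.single 0 k) g)‖ =
          (myasc (p.1 1) k : ℝ) *
            ‖MvPowerSeries.coeff (p.1 + Finsupp.single 1 k) f‖ *
            ((myasc (p.2 0) k : ℝ) *
              ‖MvPowerSeries.coeff (p.2 + Finsupp.single 0 k) g‖) := by
        rw [norm_mul, norm_mul, norm_mul, Complex.norm_natCast, Complex.norm_natCast]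
      rw [hexp]
      -- bounds on the two coefficients
      have hF := hf (p.1 + Finsupp.single 1 k)
      have hG := hg (p.2 + Finsupp.single 0 k)
      have e1 : (p.1 + Finsupp.single 1 k : Fin 3 →₀ ℕ) 2 = p.1 2 := by
        rw [Finsupp.add_apply, Finsupp.single_eq_of_ne (by decide), add_zero]
      have e2 : (p.2 + Finsupp.single 0 k : Fin 3 →₀ ℕ) 2 = p.2 2 := by
        rw [Finsupp.add_apply, Finsupp.single_eq_of_ne (by decide), add_zero]
      have e3 : degOf (p.1 + Finsupp.single 1 k) = degOf p.1 + k := by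
        rw [degOf_add, degOf_single]
      have e4 : degOf (p.2 + Finsupp.single 0 k) = degOf p.2 + k := by
        rw [degOf_add, degOf_single]
      rw [e1, e3] at hF
      rw [e2, e4] at hG
      exact pair_bound hC hR ha1 ha2 (by omega) (by omega) hp2
        (norm_nonneg _) (norm_nonneg _) hF hG
    -- sum over the antidiagonal
    have hprod : ‖MvPowerSeries.coeff m ((pdF 1)^[k] f * (pdF 0)^[k] g)‖ ≤
        (2:ℝ) ^ n * ((k.factorial : ℝ) * (k.factorial : ℝ) * (C * C) *
          ((m 2).factorial : ℝ) * (4 * R ^ 2) ^ n) := by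
      rw [MvPowerSeries.coeff_mul]
      calc ‖∑ p ∈ Finset.HasAntidiagonal.antidiagonal m,
            MvPowerSeries.coeff p.1 ((pdF 1)^[k] f) *
              MvPowerSeries.coeff p.2 ((pdF 0)^[k] g)‖
          ≤ ∑ p ∈ Finset.HasAntidiagonal.antidiagonal m,
            ‖MvPowerSeries.coeff p.1 ((pdF 1)^[k] f) *
              MvPowerSeries.coeff p.2 ((pdF 0)^[k] g)‖ := norm_sum_le _ _
        _ ≤ (Finset.HasAntidiagonal.antidiagonal m).card •
            ((k.factorial : ℝ) * (k.factorial : ℝ) * (C * C) *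
              ((m 2).factorial : ℝ) * (4 * R ^ 2) ^ n) :=
            Finset.sum_le_card_nsmul _ _ _ hpair
        _ ≤ (2:ℝ) ^ n * ((k.factorial : ℝ) * (k.factorial : ℝ) * (C * C) *
              ((m 2).factorial : ℝ) * (4 * R ^ 2) ^ n) := by
            rw [nsmul_eq_mul]
            have hcard : ((Finset.HasAntidiagonal.antidiagonal m).card : ℝ) ≤ (2:ℝ) ^ n := by
              have h1 : (Finset.HasAntidiagonal.antidiagonal m).card ≤ 2 ^ degOf m :=
                card_antidiagonal_le m
              have h2 : (2:ℕ) ^ degOf m ≤ 2 ^ n :=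
                Nat.pow_le_pow_right (by norm_num) (by omega)
              exact_mod_cast h1.trans h2
            gcongr
    -- assemble the k-term
    have hnormk : ‖(1 / (k.factorial : ℂ)) * MvPowerSeries.coeff m
          ((pdF 1)^[k] f * (pdF 0)^[k] g)‖ =
        (1 / (k.factorial : ℝ)) *
          ‖MvPowerSeries.coeff m ((pdF 1)^[k] f * (pdF 0)^[k] g)‖ := by
      rw [norm_mul, norm_div, norm_one, Complex.norm_natCast]
    rw [hnormk]
    have hkfpos : (0:ℝ) < (k.factorial : ℝ) := by exact_mod_cast k.factorial_pos
    calc (1 / (k.factorial : ℝ)) *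
          ‖MvPowerSeries.coeff m ((pdF 1)^[k] f * (pdF 0)^[k] g)‖
        ≤ (1 / (k.factorial : ℝ)) *
            ((2:ℝ) ^ n * ((k.factorial : ℝ) * (k.factorial : ℝ) * (C * C) *
              ((m 2).factorial : ℝ) * (4 * R ^ 2) ^ n)) :=
            mul_le_mul_of_nonneg_left hprod (by positivity)
      _ = (C * C) * ((k.factorial : ℝ) * ((m 2).factorial : ℝ)) *
            ((2:ℝ) ^ n * (4 * R ^ 2) ^ n) := by
          field_simp
      _ ≤ (C * C) * ((d 2).factorial : ℝ) * ((2:ℝ) ^ n * (4 * R ^ 2) ^ n) := by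
          have hff : (k.factorial : ℝ) * ((m 2).factorial : ℝ) ≤ ((d 2).factorial : ℝ) := by
            have h0 : k.factorial * (m 2).factorial ≤ (d 2).factorial := by
              rw [hm2]
              have h' := fac_mul_fac_le k (d 2 - k)
              rwa [show k + (d 2 - k) = d 2 by omega] at h'
            exact_mod_cast h0
          gcongr
      _ = C * C * ((d 2).factorial : ℝ) * (8 * R ^ 2) ^ n := by
          have h8 : (2:ℝ) ^ n * (4 * R ^ 2) ^ n = (8 * R ^ 2) ^ n := by
            rw [← mul_pow]; congr 1; ring
          rw [mul_assoc, h8, ← mul_assoc]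
  calc ‖∑ k ∈ Finset.range (d 2 + 1), (1 / (k.factorial : ℂ)) *
        MvPowerSeries.coeff (d - Finsupp.single 2 k)
          ((pdF 1)^[k] f * (pdF 0)^[k] g)‖
      ≤ ∑ k ∈ Finset.range (d 2 + 1),
        ‖(1 / (k.factorial : ℂ)) * MvPowerSeries.coeff (d - Finsupp.single 2 k)
          ((pdF 1)^[k] f * (pdF 0)^[k] g)‖ := norm_sum_le _ _
    _ ≤ (Finset.range (d 2 + 1)).card •
          (C * C * ((d 2).factorial : ℝ) * (8 * R ^ 2) ^ n) :=
        Finset.sum_le_card_nsmul _ _ _ key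
    _ ≤ (2:ℝ) ^ n * (C * C * ((d 2).factorial : ℝ) * (8 * R ^ 2) ^ n) := by
        rw [nsmul_eq_mul, Finset.card_range]
        have hcard : ((d 2 + 1 : ℕ) : ℝ) ≤ (2:ℝ) ^ n := by
          have : d 2 + 1 ≤ 2 ^ n := by omega
          exact_mod_cast this
        gcongr
    _ = C * C * ((d 2).factorial : ℝ) * ((2:ℝ) ^ n * (8 * R ^ 2) ^ n) := by ring
    _ = C * C * ((d 2).factorial : ℝ) * (16 * R ^ 2) ^ n := by
        have h16 : (2:ℝ) ^ n * (8 * R ^ 2) ^ n = (16 * R ^ 2) ^ n := by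
          rw [← mul_pow]; congr 1; ring
        rw [h16]
    _ = C * C * ((d 2).factorial : ℝ) * (16 * R ^ 2) ^ degOf d := by rw [hn]

end BKP

/-- **Boutet de Monvel–Krée / Pham.**  On `ℂ[[x,y,ℏ]]` (variables `0 = x`, `1 = y`,
`2 = ℏ`) equipped with the normal-ordered product
`f ⋆ g = Σ_k (ℏ^k/k!)(∂_y^k f)(∂_x^k g)` of the Heisenberg algebra `[a,a†] = ℏ`, the
`⋆`-product of two Borel-analytic series is Borel-analytic; that is, the set `𝒬` of
Borel-analytic formal series is a subalgebra of `(ℂ[[x,y,ℏ]], ⋆)`. -/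
theorem borel_analytic_star_closed
    (f g : MvPowerSeries (Fin 3) ℂ)
    (hf : BorelAnalytic 2 f) (hg : BorelAnalytic 2 g) :
    BorelAnalytic 2 (nstar 0 1 2 f g) := by
  obtain ⟨Cf, Rf, hCf, hRf, hbf⟩ := extract hf
  obtain ⟨Cg, Rg, hCg, hRg, hbg⟩ := extract hg
  set C : ℝ := max Cf Cg with hC
  set R : ℝ := max Rf Rg with hR
  have hC0 : (0:ℝ) ≤ C := hCf.trans (le_max_left _ _)
  have hR1 : (1:ℝ) ≤ R := hRf.trans (le_max_left _ _)
  have hbf' : Bnd C R f := bnd_mono hbf hCf (le_max_left _ _) (by linarith) (le_max_left _ _)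
  have hbg' : Bnd C R g := bnd_mono hbg hCg (le_max_right _ _) (by linarith) (le_max_right _ _)
  have hcore := core hC0 hR1 hbf' hbg'
  exact reconstruct (mul_nonneg hC0 hC0) (by nlinarith) hcore
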